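/- Let a, b, ω be real numbers with a > 0, b > 0, a² + b² = 1, b < a, and 0 < ω ≤ 1. Define F : ℝ → ℝ by F(λ) = (a² + 2λωab + λ²b²)/(1 + λ² + 4λωab). Then there exists λ < 0 such that 1 + λ² + 4λωab > 0 and F(λ) > a². -/
import Mathlib

/-- with `b < a` and `0 < ω ≤ 1`, there is a negative `λ` where the
denominator is positive and `F(λ) > a² = F(0)`. -/
theorem stmt9 (a b ω : ℝ) (ha : a > 0) (hb : b > 0) (hab : a ^ 2 + b ^ 2 = 1)
    (hba : b < a) (hω0 : 0 < ω) (hω1 : ω ≤ 1) :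
    ∃ lam : ℝ, lam < 0 ∧ 1 + lam ^ 2 + 4 * lam * ω * a * b > 0 ∧
      (a ^ 2 + 2 * lam * ω * a * b + lam ^ 2 * b ^ 2)
        / (1 + lam ^ 2 + 4 * lam * ω * a * b) > a ^ 2 := by
  have htpos : 0 < ω * a * b := by positivity
  have habd : a * b ≤ 1 / 2 := by nlinarith [sq_nonneg (a - b)]
  have ht : ω * a * b ≤ 1 / 2 := by nlinarith [mul_pos ha hb]
  have ht2 : (ω * a * b) ^ 2 ≤ 1 / 4 := by nlinarith
  have hden : 1 + (-(ω * a * b)) ^ 2 + 4 * -(ω * a * b) * ω * a * b > 0 := by nlinarith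
  refine ⟨-(ω * a * b), by linarith, hden, ?_⟩
  rw [gt_iff_lt, lt_div_iff₀ hden]
  have hab2 : b ^ 2 < a ^ 2 := by nlinarith
  nlinarith [mul_pos (mul_pos htpos htpos) (sub_pos.mpr hab2)]
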